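/- arXiv:1101.3594 — 4 statements merged into one kernel-verified Lean document; each statement's English description precedes it below -/
import Mathlib

section
/- Let η, η^H be measurable functions with values in [-1/2, 1/2], let α : 𝒳 → [0,1), and let η̃ = (1-α)η + α·η^H pointwise. If at a point x one has η(x)·η̃(x) < 0, then 2|η(x)| ≤ α(x)/(1 - α(x)). In particular, in the contamination model with α_ε(x) = ε·h(x)/((1-ε)g(x) + ε·h(x)), the condition η(x)·η̃(x) < 0 implies 2|η(x)| ≤ (ε/(1-ε))·(h(x)/g(x)). -/
open MeasureTheory Filter

/-- sign function: 1 if t > 0, -1 otherwise. -/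
noncomputable def sgn (t : ℝ) : ℝ := if 0 < t then 1 else -1

/-- Risk under 0-1 loss of the decision rule `1_{f(X)>0}` when `(X,Y) ~ P`,
    labels encoded as `Bool` (`true` = 1): `R(f) = P(Y ≠ 1_{f(X)>0})`. -/
noncomputable def risk {𝒳 : Type*} [MeasurableSpace 𝒳]
    (P : Measure (𝒳 × Bool)) (f : 𝒳 → ℝ) : ℝ :=
  (P {q | (q.2 = true) ≠ (0 < f q.1)}).toReal

/-- `η` is the Bayes decision function of the joint distribution `P` of `(X,Y)`:
    `η(x) = P(Y=1 | X=x) - 1/2`, i.e. `η` is measurable, takes values in `[-1/2,1/2]`,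
    and `∫_A (η + 1/2) dP_X = P(A × {1})` for all measurable `A`. -/
def IsBayesDecisionFunction {𝒳 : Type*} [MeasurableSpace 𝒳]
    (P : Measure (𝒳 × Bool)) (η : 𝒳 → ℝ) : Prop :=
  Measurable η ∧ (∀ x, η x ∈ Set.Icc (-(1/2) : ℝ) (1/2)) ∧
    ∀ A : Set 𝒳, MeasurableSet A →
      ∫ x in A, (η x + 1/2) ∂(P.map Prod.fst) = (P (A ×ˢ ({true} : Set Bool))).toReal

/-- The contaminated distribution `G̃ = (1-ε)G + εH`. -/
noncomputable def contaminate {Ω : Type*} [MeasurableSpace Ω]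
    (G H : Measure Ω) (ε : ℝ) : Measure Ω :=
  ENNReal.ofReal (1 - ε) • G + ENNReal.ofReal ε • H

/-- Pointwise consequence of sign disagreement: if η(x)·η̃(x) < 0 for the mixture
η̃ = (1-α)η + α·η^H with α(x) ∈ [0,1), then 2|η(x)| ≤ α(x)/(1-α(x)); in particular,
for α = α_ε, it implies 2|η(x)| ≤ (ε/(1-ε))·(h(x)/g(x)). -/
theorem statement4 {𝒳 : Type*} (η ηH : 𝒳 → ℝ)
    (hη : ∀ x, η x ∈ Set.Icc (-(1/2) : ℝ) (1/2))
    (hηH : ∀ x, ηH x ∈ Set.Icc (-(1/2) : ℝ) (1/2)) :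
    (∀ (α ηt : 𝒳 → ℝ), (∀ x, α x ∈ Set.Ico (0 : ℝ) 1) →
      (∀ x, ηt x = (1 - α x) * η x + α x * ηH x) →
      ∀ x, η x * ηt x < 0 → 2 * |η x| ≤ α x / (1 - α x)) ∧
    (∀ (ε : ℝ) (g h : 𝒳 → ℝ), 0 ≤ ε → ε < 1 → (∀ x, 0 ≤ h x) →
      ∀ ηt : 𝒳 → ℝ,
      (∀ x, ηt x = (1 - ε * h x / ((1 - ε) * g x + ε * h x)) * η x
          + (ε * h x / ((1 - ε) * g x + ε * h x)) * ηH x) →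
      ∀ x, 0 < g x → η x * ηt x < 0 →
        2 * |η x| ≤ ε / (1 - ε) * (h x / g x)) := by
  have key : ∀ (a e f t : ℝ), 0 ≤ a → a < 1 → -(1/2) ≤ f → f ≤ 1/2 →
      t = (1 - a) * e + a * f → e * t < 0 → 2 * |e| ≤ a / (1 - a) := by
    intro a e f t ha0 ha1 hf1 hf2 ht hx
    have h1a : (0:ℝ) < 1 - a := by linarith
    rw [le_div_iff₀ h1a]
    rcases mul_neg_iff.mp hx with ⟨hep, htn⟩ | ⟨hen, htp⟩
    · rw [abs_of_pos hep]
      nlinarith [mul_nonneg ha0 (by linarith : (0:ℝ) ≤ f + 1/2)]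
    · rw [abs_of_neg hen]
      nlinarith [mul_nonneg ha0 (by linarith : (0:ℝ) ≤ 1/2 - f)]
  constructor
  · intro α ηt hα hηt x hx
    exact key (α x) (η x) (ηH x) (ηt x) (hα x).1 (hα x).2 (hηH x).1 (hηH x).2 (hηt x) hx
  · intro ε g h hε0 hε1 hh ηt hηt x hg hx
    set a : ℝ := ε * h x / ((1 - ε) * g x + ε * h x) with ha
    have hD : (0:ℝ) < (1 - ε) * g x + ε * h x := by
      have := mul_nonneg hε0 (hh x)
      nlinarith
    have ha0 : 0 ≤ a := div_nonneg (mul_nonneg hε0 (hh x)) hD.le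
    have ha1 : a < 1 := by
      rw [ha, div_lt_one hD]
      nlinarith
    have := key a (η x) (ηH x) (ηt x) ha0 ha1 (hηH x).1 (hηH x).2 (hηt x) hx
    have heq : a / (1 - a) = ε / (1 - ε) * (h x / g x) := by
      rw [ha]
      field_simp
      rw [add_sub_cancel_right, mul_comm (1 - ε) (g x), ← div_div, mul_div_assoc, div_self hg.ne', mul_one]
    linarith [heq ▸ this]
end

section
/- (Data contamination bound) Let G and H be joint distributions of (X,Y) on ℝ^p × {0,1} such that the X-marginal of G admits a density g, let 0 ≤ ε < 1, and let G̃ = (1-ε)G + εH. Let η and η̃ be the Bayes decision functions under G and G̃ respectively, let R denote risk with respect to G under 0-1 loss, and let R* be the Bayes risk under G. Then for any contaminating distribution H, the risk under G of the Bayes rule of the contaminated distribution satisfies R(η̃) - R* ≤ ε/(1-ε). -/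
open MeasureTheory Filter

lemma intF {𝒳 : Type*} [MeasurableSpace 𝒳] (μ : Measure 𝒳) [IsFiniteMeasure μ]
    {F : 𝒳 → ℝ} (hF : Measurable F) (hb : ∀ x, |F x| ≤ 1) : Integrable F μ :=
  (integrable_const 1).mono' hF.aestronglyMeasurable
    (Filter.Eventually.of_forall fun x => by simpa using hb x)

lemma risk_eq {𝒳 : Type*} [MeasurableSpace 𝒳] (P : Measure (𝒳 × Bool)) [IsFiniteMeasure P]
    (η f : 𝒳 → ℝ) (hB : IsBayesDecisionFunction P η) (hf : Measurable f) :
    risk P f = ∫ x, (if 0 < f x then 1/2 - η x else η x + 1/2) ∂(P.map Prod.fst) := by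
  obtain ⟨hηm, hηb, hη⟩ := hB
  set μ := P.map Prod.fst with hμ
  set A : Set 𝒳 := {x | 0 < f x} with hAdef
  have hA : MeasurableSet A := measurableSet_lt measurable_const hf
  have hS : {q : 𝒳 × Bool | (q.2 = true) ≠ (0 < f q.1)}
      = (Aᶜ ×ˢ ({true} : Set Bool)) ∪ (A ×ˢ ({false} : Set Bool)) := by
    ext ⟨x, b⟩; cases b <;> simp [A, Ne, eq_iff_iff]
  have hdisj : Disjoint (Aᶜ ×ˢ ({true} : Set Bool)) (A ×ˢ ({false} : Set Bool)) := by
    rw [Set.disjoint_left]; rintro ⟨x, b⟩ ⟨hx, -⟩ ⟨hx', -⟩; exact hx hx'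
  have hmeas2 : MeasurableSet (A ×ˢ ({false} : Set Bool)) :=
    hA.prod (measurableSet_singleton false)
  have hPS : P {q : 𝒳 × Bool | (q.2 = true) ≠ (0 < f q.1)}
      = P (Aᶜ ×ˢ ({true} : Set Bool)) + P (A ×ˢ ({false} : Set Bool)) := by
    rw [hS, measure_union hdisj hmeas2]
  have hmapA : μ A = P (A ×ˢ (Set.univ : Set Bool)) := by
    rw [hμ, Measure.map_apply measurable_fst hA]
    congr 1; ext ⟨x, b⟩; simp
  have hsplit : P (A ×ˢ (Set.univ : Set Bool))
      = P (A ×ˢ ({true} : Set Bool)) + P (A ×ˢ ({false} : Set Bool)) := by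
    have : A ×ˢ (Set.univ : Set Bool)
        = (A ×ˢ ({true} : Set Bool)) ∪ (A ×ˢ ({false} : Set Bool)) := by
      ext ⟨x, b⟩; cases b <;> simp
    rw [this, measure_union _ hmeas2]
    rw [Set.disjoint_left]; rintro ⟨x, b⟩ ⟨-, hb⟩ ⟨-, hb'⟩
    simp_all
  have hfalse : (P (A ×ˢ ({false} : Set Bool))).toReal
      = (μ A).toReal - ∫ x in A, (η x + 1/2) ∂μ := by
    rw [hη A hA, hmapA, hsplit,
      ENNReal.toReal_add (measure_ne_top _ _) (measure_ne_top _ _)]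
    ring
  have hInt1 : Integrable (fun x => η x + 1/2) μ := by
    apply intF μ (hηm.add measurable_const)
    intro x; obtain ⟨h1, h2⟩ := hηb x; rw [abs_le]; simp only [Pi.add_apply]; constructor <;> linarith
  have hIntF : Integrable (fun x => if 0 < f x then 1/2 - η x else η x + 1/2) μ := by
    apply intF μ (Measurable.ite hA (measurable_const.sub hηm) (hηm.add measurable_const))
    intro x; obtain ⟨h1, h2⟩ := hηb x
    by_cases h : 0 < f x <;> simp [h] <;> rw [abs_le] <;> constructor <;> linarith
  have hμA : (μ A).toReal = ∫ _x in A, (1 : ℝ) ∂μ := by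
    rw [setIntegral_const]; simp; rfl
  have key : ∫ x, (if 0 < f x then 1/2 - η x else η x + 1/2) ∂μ
      = (∫ x in A, (1/2 - η x) ∂μ) + ∫ x in Aᶜ, (η x + 1/2) ∂μ := by
    rw [← integral_add_compl hA hIntF]
    congr 1
    · apply setIntegral_congr_fun hA; intro x hx; simp [hAdef] at hx; simp [hx]
    · apply setIntegral_congr_fun hA.compl; intro x hx
      simp [hAdef] at hx; simp [not_lt.2 hx, not_lt_of_ge hx]
  have hhalf : ∫ x in A, (1/2 - η x) ∂μ
      = (∫ _x in A, (1 : ℝ) ∂μ) - ∫ x in A, (η x + 1/2) ∂μ := by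
    rw [← integral_sub (integrable_const 1).integrableOn hInt1.integrableOn]
    apply setIntegral_congr_fun hA; intro x _; ring
  rw [risk, hPS, ENNReal.toReal_add (measure_ne_top _ _) (measure_ne_top _ _),
    ← hη Aᶜ hA.compl, hfalse, hμA, key, hhalf]
  ring

lemma bayes_opt {𝒳 : Type*} [MeasurableSpace 𝒳] (P : Measure (𝒳 × Bool)) [IsFiniteMeasure P]
    (η f : 𝒳 → ℝ) (hB : IsBayesDecisionFunction P η) (hf : Measurable f) :
    risk P η ≤ risk P f := by
  rw [risk_eq P η η hB hB.1, risk_eq P η f hB hf]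
  have hηm := hB.1
  have hηb := hB.2.1
  apply integral_mono
  · apply intF _ (Measurable.ite (measurableSet_lt measurable_const hηm)
      (measurable_const.sub hηm) (hηm.add measurable_const))
    intro x; obtain ⟨h1, h2⟩ := hηb x
    by_cases h : 0 < η x <;> simp [h] <;> rw [abs_le] <;> constructor <;> linarith
  · apply intF _ (Measurable.ite (measurableSet_lt measurable_const hf)
      (measurable_const.sub hηm) (hηm.add measurable_const))
    intro x; obtain ⟨h1, h2⟩ := hηb x
    by_cases h : 0 < f x <;> simp [h] <;> rw [abs_le] <;> constructor <;> linarith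
  · intro x
    by_cases h1 : 0 < η x <;> by_cases h2 : 0 < f x <;> simp [h1, h2] <;> push_neg at * <;> linarith

lemma risk_contaminate {𝒳 : Type*} [MeasurableSpace 𝒳]
    (G H : Measure (𝒳 × Bool)) [IsProbabilityMeasure G] [IsProbabilityMeasure H]
    (ε : ℝ) (hε : 0 ≤ ε) (hε1 : ε ≤ 1) (f : 𝒳 → ℝ) :
    risk (contaminate G H ε) f = (1 - ε) * risk G f + ε * risk H f := by
  unfold risk contaminate
  rw [Measure.add_apply, Measure.smul_apply, Measure.smul_apply, smul_eq_mul, smul_eq_mul,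
    ENNReal.toReal_add (ENNReal.mul_ne_top ENNReal.ofReal_ne_top (measure_ne_top _ _))
      (ENNReal.mul_ne_top ENNReal.ofReal_ne_top (measure_ne_top _ _)),
    ENNReal.toReal_mul, ENNReal.toReal_mul, ENNReal.toReal_ofReal (by linarith),
    ENNReal.toReal_ofReal hε]

/-- Theorem 1 (data contamination bound): if the X-marginal of G has a density g,
then for any contaminating distribution H, R(η̃) - R* ≤ ε/(1-ε). -/
theorem statement6 {p : ℕ}
    (G H : Measure ((Fin p → ℝ) × Bool))
    [IsProbabilityMeasure G] [IsProbabilityMeasure H]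
    (g : (Fin p → ℝ) → ℝ)
    (hGg : G.map Prod.fst = volume.withDensity fun x => ENNReal.ofReal (g x))
    (ε : ℝ) (hε : 0 ≤ ε) (hε1 : ε < 1)
    (η ηt : (Fin p → ℝ) → ℝ)
    (hη : IsBayesDecisionFunction G η)
    (hηt : IsBayesDecisionFunction (contaminate G H ε) ηt) :
    risk G ηt - risk G η ≤ ε / (1 - ε) := by
  haveI : IsFiniteMeasure (contaminate G H ε) := by
    constructor
    rw [contaminate, Measure.add_apply, Measure.smul_apply, Measure.smul_apply,
      smul_eq_mul, smul_eq_mul, measure_univ, measure_univ, mul_one, mul_one]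
    exact ENNReal.add_lt_top.2 ⟨ENNReal.ofReal_lt_top, ENNReal.ofReal_lt_top⟩
  have hopt : risk (contaminate G H ε) ηt ≤ risk (contaminate G H ε) η :=
    bayes_opt _ ηt η hηt hη.1
  rw [risk_contaminate G H ε hε hε1.le ηt, risk_contaminate G H ε hε hε1.le η] at hopt
  have h1 : risk H η ≤ 1 := by
    rw [risk]; exact ENNReal.toReal_le_of_le_ofReal zero_le_one (by simpa using prob_le_one)
  have h2 : (0:ℝ) ≤ risk H ηt := ENNReal.toReal_nonneg
  rw [le_div_iff₀ (by linarith : (0:ℝ) < 1 - ε)]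
  nlinarith
end

section
/- Let (X,Y) have joint distribution P on 𝒳 × {0,1} with Bayes decision function η satisfying P(η(X)=0) = 0, and let (f_n) be a sequence of measurable decision functions whose risks converge to the Bayes risk, R(f_n) → R*. Then the induced decision rules converge to the Bayes rule in probability: P( 1_{f_n(X)>0} ≠ 1_{η(X)>0} ) → 0 as n → ∞. -/
open MeasureTheory Filter

/-- Lemma 2: if P(η(X)=0) = 0 and R(f_n) → R*, then the induced rules converge
to the Bayes rule in probability: P(1_{f_n(X)>0} ≠ 1_{η(X)>0}) → 0. -/
theorem statement8 {𝒳 : Type*} [MeasurableSpace 𝒳]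
    (P : Measure (𝒳 × Bool)) [IsProbabilityMeasure P]
    (η : 𝒳 → ℝ)
    (hη : IsBayesDecisionFunction P η)
    (hη0 : P.map Prod.fst {x | η x = 0} = 0)
    (f : ℕ → 𝒳 → ℝ) (hf : ∀ n, Measurable (f n))
    (hrisk : Tendsto (fun n => risk P (f n)) atTop (nhds (risk P η))) :
    Tendsto (fun n => (P.map Prod.fst {x | (0 < f n x) ≠ (0 < η x)}).toReal)
      atTop (nhds 0) := by
  classical
  simp only [risk] at hrisk
  obtain ⟨hηm, hηb, hηint⟩ := hη
  set μ : Measure 𝒳 := P.map Prod.fst with hμdef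
  haveI hμP : IsProbabilityMeasure μ := Measure.isProbabilityMeasure_map measurable_fst.aemeasurable
  have hη_int : Integrable η μ := by
    refine Integrable.mono' (integrable_const (1/2 : ℝ)) hηm.aestronglyMeasurable
      (ae_of_all _ fun x => ?_)
    have h := hηb x
    rw [Real.norm_eq_abs, abs_le]
    exact ⟨h.1, h.2⟩
  -- key risk formula
  have key : ∀ g : 𝒳 → ℝ, Measurable g →
      (P {q | (q.2 = true) ≠ (0 < g q.1)}).toReal
        = 1/2 + ∫ x, η x * (if 0 < g x then (-1:ℝ) else 1) ∂μ := by
    intro g hg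
    set B : Set 𝒳 := {x | 0 < g x} with hBdef
    have hB : MeasurableSet B := measurableSet_lt measurable_const hg
    have hset : {q : 𝒳 × Bool | (q.2 = true) ≠ (0 < g q.1)}
        = (Bᶜ ×ˢ ({true} : Set Bool)) ∪ (B ×ˢ ({false} : Set Bool)) := by
      ext ⟨x, b⟩
      cases b <;> simp [B, eq_iff_iff, Set.mem_prod]
    have hdisj : Disjoint (Bᶜ ×ˢ ({true} : Set Bool)) (B ×ˢ ({false} : Set Bool)) := by
      rw [Set.disjoint_left]
      rintro ⟨x, b⟩ ⟨hx, -⟩ ⟨hx', -⟩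
      exact hx hx'
    have hmeas2 : MeasurableSet (B ×ˢ ({false} : Set Bool)) :=
      hB.prod (measurableSet_singleton _)
    have hPsplit : P {q : 𝒳 × Bool | (q.2 = true) ≠ (0 < g q.1)}
        = P (Bᶜ ×ˢ ({true} : Set Bool)) + P (B ×ˢ ({false} : Set Bool)) := by
      rw [hset, measure_union hdisj hmeas2]
    -- μ B = P (B ×ˢ univ) = P(B×{true}) + P(B×{false})
    have hμB : μ B = P (B ×ˢ ({true} : Set Bool)) + P (B ×ˢ ({false} : Set Bool)) := by
      have h1 : μ B = P (B ×ˢ (Set.univ : Set Bool)) := by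
        rw [hμdef, Measure.map_apply measurable_fst hB]
        congr 1
        ext ⟨x, b⟩; simp
      have h2 : (B ×ˢ (Set.univ : Set Bool)) = (B ×ˢ ({true} : Set Bool)) ∪ (B ×ˢ ({false} : Set Bool)) := by
        rw [← Set.prod_union]
        congr 1
        ext b; cases b <;> simp
      have hd : Disjoint (B ×ˢ ({true} : Set Bool)) (B ×ˢ ({false} : Set Bool)) := by
        rw [Set.disjoint_left]
        rintro ⟨x, b⟩ ⟨-, hb⟩ ⟨-, hb'⟩
        simp_all
      rw [h1, h2, measure_union hd hmeas2]
    have hc1 : ∫ x in Bᶜ, (η x + 1/2) ∂μ = (P (Bᶜ ×ˢ ({true} : Set Bool))).toReal :=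
      hηint Bᶜ hB.compl
    have hc2 : ∫ x in B, (η x + 1/2) ∂μ = (P (B ×ˢ ({true} : Set Bool))).toReal :=
      hηint B hB
    have hadd : ∀ s : Set 𝒳, MeasurableSet s →
        ∫ x in s, (η x + 1/2) ∂μ = (∫ x in s, η x ∂μ) + (1/2) * (μ s).toReal := by
      intro s hs
      rw [integral_add (hη_int.restrict) (integrable_const _), setIntegral_const]
      simp [mul_comm, measureReal_def]
    -- split RHS integral
    have hsplit : ∫ x, η x * (if 0 < g x then (-1:ℝ) else 1) ∂μ
        = (∫ x in Bᶜ, η x ∂μ) - ∫ x in B, η x ∂μ := by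
      have hint : Integrable (fun x => η x * (if 0 < g x then (-1:ℝ) else 1)) μ := by
        refine Integrable.mono' (integrable_const (1/2 : ℝ))
          (hηm.mul (Measurable.ite (measurableSet_lt measurable_const hg)
            measurable_const measurable_const)).aestronglyMeasurable
          (ae_of_all _ fun x => ?_)
        have h := hηb x
        rw [Real.norm_eq_abs, abs_mul]
        have : |η x| ≤ 1/2 := abs_le.mpr ⟨h.1, h.2⟩
        split <;> simp <;> linarith [abs_nonneg (η x)]
      rw [← integral_add_compl hB hint]
      have e1 : ∫ x in B, η x * (if 0 < g x then (-1:ℝ) else 1) ∂μ = ∫ x in B, -η x ∂μ := by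
        refine setIntegral_congr_fun hB fun x hx => ?_
        simp only [hBdef, Set.mem_setOf_eq] at hx
        simp [hx]
      have e2 : ∫ x in Bᶜ, η x * (if 0 < g x then (-1:ℝ) else 1) ∂μ = ∫ x in Bᶜ, η x ∂μ := by
        refine setIntegral_congr_fun hB.compl fun x hx => ?_
        simp only [hBdef, Set.mem_compl_iff, Set.mem_setOf_eq] at hx
        simp [hx]
      rw [e1, e2, integral_neg]
      ring
    have hfin1 : P (Bᶜ ×ˢ ({true} : Set Bool)) ≠ ⊤ := measure_ne_top _ _
    have hfin2 : P (B ×ˢ ({false} : Set Bool)) ≠ ⊤ := measure_ne_top _ _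
    have hfin3 : P (B ×ˢ ({true} : Set Bool)) ≠ ⊤ := measure_ne_top _ _
    have htotal : (μ B).toReal + (μ Bᶜ).toReal = 1 := by
      have := measure_add_measure_compl (μ := μ) hB
      rw [measure_univ] at this
      rw [← ENNReal.toReal_add (measure_ne_top _ _) (measure_ne_top _ _), this]
      simp
    have hμBr : (μ B).toReal
        = (P (B ×ˢ ({true} : Set Bool))).toReal + (P (B ×ˢ ({false} : Set Bool))).toReal := by
      rw [hμB, ENNReal.toReal_add hfin3 hfin2]
    rw [hPsplit, ENNReal.toReal_add hfin1 hfin2, hsplit, ← hc1]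
    have hc2' : (P (B ×ˢ ({false} : Set Bool))).toReal
        = (μ B).toReal - ∫ x in B, (η x + 1/2) ∂μ := by
      rw [hc2]; linarith [hμBr]
    rw [hc2', hadd B hB, hadd Bᶜ hB.compl]
    linarith [htotal]
  -- disagreement sets
  set D : ℕ → Set 𝒳 := fun n => {x | (0 < f n x) ≠ (0 < η x)} with hDdef
  have hDm : ∀ n, MeasurableSet (D n) := by
    intro n
    have : D n = ({x | 0 < f n x} \ {x | 0 < η x}) ∪ ({x | 0 < η x} \ {x | 0 < f n x}) := by
      ext x
      simp only [hDdef, Set.mem_setOf_eq, Set.mem_union, Set.mem_diff, Set.mem_setOf_eq,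
        ne_eq, eq_iff_iff]
      tauto
    rw [this]
    exact (((measurableSet_lt measurable_const (hf n)).diff
      (measurableSet_lt measurable_const hηm)).union
      ((measurableSet_lt measurable_const hηm).diff
        (measurableSet_lt measurable_const (hf n))))
  have h2η_int : Integrable (fun x => 2 * |η x|) μ := (hη_int.abs.const_mul 2)
  have hdiff : ∀ n, (P {q | (q.2 = true) ≠ (0 < f n q.1)}).toReal
      - (P {q | (q.2 = true) ≠ (0 < η q.1)}).toReal = ∫ x in D n, 2 * |η x| ∂μ := by
    intro n
    rw [key (f n) (hf n), key η hηm]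
    have hint : ∀ g : 𝒳 → ℝ, Measurable g →
        Integrable (fun x => η x * (if 0 < g x then (-1:ℝ) else 1)) μ := by
      intro g hg
      refine Integrable.mono' (integrable_const (1/2 : ℝ))
        (hηm.mul (Measurable.ite (measurableSet_lt measurable_const hg)
          measurable_const measurable_const)).aestronglyMeasurable
        (ae_of_all _ fun x => ?_)
      have h := hηb x
      rw [Real.norm_eq_abs, abs_mul]
      have : |η x| ≤ 1/2 := abs_le.mpr ⟨h.1, h.2⟩
      split <;> simp <;> linarith [abs_nonneg (η x)]
    have : (1/2 + ∫ x, η x * (if 0 < f n x then (-1:ℝ) else 1) ∂μ)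
        - (1/2 + ∫ x, η x * (if 0 < η x then (-1:ℝ) else 1) ∂μ)
        = ∫ x, (η x * (if 0 < f n x then (-1:ℝ) else 1)
            - η x * (if 0 < η x then (-1:ℝ) else 1)) ∂μ := by
      rw [integral_sub (hint (f n) (hf n)) (hint η hηm)]
      ring
    rw [this, ← integral_indicator (hDm n)]
    congr 1
    funext x
    by_cases h1 : 0 < f n x <;> by_cases h2 : 0 < η x <;>
      simp [Set.indicator, hDdef, h1, h2, abs_of_pos, abs_of_nonpos, le_of_not_gt] <;>
      rcases abs_cases (η x) with ⟨ha, _⟩ | ⟨ha, _⟩ <;> linarith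
  have hT : Tendsto (fun n => ∫ x in D n, 2 * |η x| ∂μ) atTop (nhds 0) := by
    have := hrisk.sub (tendsto_const_nhds
      (x := (P {q | (q.2 = true) ≠ (0 < η q.1)}).toReal) (f := atTop))
    rw [sub_self] at this
    exact this.congr hdiff
  -- epsilon argument
  rw [Metric.tendsto_atTop]
  intro ε hε
  -- choose δ
  obtain ⟨δ, hδ0, hEδ⟩ : ∃ δ : ℝ, 0 < δ ∧ (μ {x | |η x| < δ}).toReal < ε/2 := by
    set S : ℕ → Set 𝒳 := fun k => {x | |η x| < 1/(k+1)} with hSdef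
    have hSm : ∀ k, MeasurableSet (S k) := fun k =>
      measurableSet_lt hηm.abs measurable_const
    have hanti : Antitone S := by
      intro i j hij x hx
      simp only [hSdef, Set.mem_setOf_eq] at hx ⊢
      refine lt_of_lt_of_le hx ?_
      gcongr
    have hiInt : ⋂ k, S k = {x | η x = 0} := by
      ext x
      simp only [Set.mem_iInter, hSdef, Set.mem_setOf_eq]
      constructor
      · intro h
        by_contra hne
        have hpos : 0 < |η x| := abs_pos.mpr hne
        obtain ⟨k, hk⟩ := exists_nat_one_div_lt hpos
        exact absurd (h k) (not_lt.mpr hk.le)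
      · intro h k
        rw [h, abs_zero]
        positivity
    have hTm : Tendsto (fun k => μ (S k)) atTop (nhds 0) := by
      have := MeasureTheory.tendsto_measure_iInter_atTop (μ := μ) (s := S)
        (fun k => (hSm k).nullMeasurableSet) hanti ⟨0, measure_ne_top _ _⟩
      rw [hiInt, hη0] at this
      exact this
    have : ∀ᶠ k in atTop, μ (S k) < ENNReal.ofReal (ε/2) :=
      Filter.Tendsto.eventually_lt_const (by simp [ENNReal.ofReal_pos]; linarith) hTm
    obtain ⟨k, hk⟩ := this.exists
    refine ⟨1/(k+1), by positivity, ?_⟩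
    have := (ENNReal.toReal_lt_toReal (measure_ne_top _ _) ENNReal.ofReal_ne_top).mpr hk
    rwa [ENNReal.toReal_ofReal (by linarith)] at this
  set E : Set 𝒳 := {x | |η x| < δ} with hEdef
  have hEm : MeasurableSet E := measurableSet_lt hηm.abs measurable_const
  have hev : ∀ᶠ n in atTop, (∫ x in D n, 2 * |η x| ∂μ) < δ * ε :=
    Filter.Tendsto.eventually_lt_const (by positivity) hT
  obtain ⟨N, hN⟩ := eventually_atTop.mp hev
  refine ⟨N, fun n hn => ?_⟩
  have hDn := hN n hn
  -- bound μ (D n)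
  have hsplitμ : (μ (D n)).toReal = (μ (D n ∩ E)).toReal + (μ (D n \ E)).toReal := by
    rw [← ENNReal.toReal_add (measure_ne_top _ _) (measure_ne_top _ _),
      measure_inter_add_diff (D n) hEm]
  have hb1 : (μ (D n ∩ E)).toReal ≤ (μ E).toReal :=
    ENNReal.toReal_mono (measure_ne_top _ _) (measure_mono Set.inter_subset_right)
  have hb2 : 2 * δ * (μ (D n \ E)).toReal ≤ ∫ x in D n \ E, 2 * |η x| ∂μ := by
    refine setIntegral_ge_of_const_le_real ((hDm n).diff hEm) (measure_ne_top _ _)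
      (fun x hx => ?_) h2η_int.integrableOn
    have : ¬ |η x| < δ := hx.2
    push_neg at this
    linarith
  have hb3 : ∫ x in D n \ E, 2 * |η x| ∂μ ≤ ∫ x in D n, 2 * |η x| ∂μ := by
    refine setIntegral_mono_set h2η_int.integrableOn
      (ae_of_all _ fun x => by positivity)
      (HasSubset.Subset.eventuallyLE Set.diff_subset)
  have hb4 : (μ (D n \ E)).toReal < ε/2 := by
    have h1 : 2 * δ * (μ (D n \ E)).toReal < δ * ε := by linarith
    nlinarith [ENNReal.toReal_nonneg (a := μ (D n \ E))]
  have hfinal : (μ (D n)).toReal < ε := by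
    rw [hsplitμ]; linarith
  rw [Real.dist_eq, sub_zero, abs_of_nonneg ENNReal.toReal_nonneg]
  exact hfinal
end

section
/- Let G and H be joint distributions of (X,Y) on 𝒳 × {0,1}, let 0 ≤ ε < 1, let G̃ = (1-ε)G + εH, and let η̃ be the Bayes decision function of G̃ with G̃(η̃(X)=0) = 0. Let (f̃_n) be a sequence of measurable decision functions trained on samples from G̃ such that their risks under G̃ converge to the Bayes risk of G̃ (as holds almost surely for a universally consistent classification algorithm). Then the risks evaluated under the clean distribution G converge: R_G(f̃_n) → R_G(η̃) as n → ∞. -/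
open MeasureTheory Filter

section Aux

variable {𝒳 : Type*} [MeasurableSpace 𝒳]

/-- |μ s - μ t| ≤ μ (s Δ t) for a finite measure, in real numbers. -/
lemma abs_toReal_measure_sub_le {μ : Measure 𝒳} [IsFiniteMeasure μ] (s t : Set 𝒳) :
    |(μ s).toReal - (μ t).toReal| ≤ (μ (symmDiff s t)).toReal := by
  have key : ∀ u v : Set 𝒳, (μ u).toReal - (μ v).toReal ≤ (μ (symmDiff u v)).toReal := by
    intro u v
    have hsub : u ⊆ v ∪ symmDiff u v := by
      intro x hx
      by_cases hxv : x ∈ v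
      · exact Or.inl hxv
      · exact Or.inr (Set.mem_symmDiff.mpr (Or.inl ⟨hx, hxv⟩))
    have h1 : μ u ≤ μ v + μ (symmDiff u v) :=
      le_trans (measure_mono hsub) (measure_union_le _ _)
    have h2 : (μ u).toReal ≤ (μ v).toReal + (μ (symmDiff u v)).toReal := by
      rw [← ENNReal.toReal_add (measure_ne_top _ _) (measure_ne_top _ _)]
      exact ENNReal.toReal_mono (ENNReal.add_ne_top.mpr ⟨measure_ne_top _ _, measure_ne_top _ _⟩) h1
    linarith
  rw [abs_sub_le_iff]
  refine ⟨key s t, ?_⟩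
  have := key t s
  rwa [symmDiff_comm] at this

/-- Risk formula in terms of the Bayes decision function. -/
lemma risk_eq_of_bayes {P : Measure (𝒳 × Bool)} [IsProbabilityMeasure P] {η : 𝒳 → ℝ}
    (hη : IsBayesDecisionFunction P η) {g : 𝒳 → ℝ} (hg : Measurable g) :
    risk P g = (∫ x, (η x + 1/2) ∂(P.map Prod.fst))
      - 2 * ∫ x in {x | 0 < g x}, η x ∂(P.map Prod.fst) := by
  obtain ⟨hmeas, hbd, hbayes⟩ := hη
  set μ := P.map Prod.fst with hμ
  haveI : IsProbabilityMeasure μ := Measure.isProbabilityMeasure_map measurable_fst.aemeasurable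
  have hηint : Integrable η μ := by
    refine Integrable.mono' (integrable_const (1/2 : ℝ)) hmeas.aestronglyMeasurable ?_
    filter_upwards with x
    rw [Real.norm_eq_abs, abs_le]
    exact ⟨(hbd x).1, (hbd x).2⟩
  set A := {x | 0 < g x} with hA_def
  have hA : MeasurableSet A := measurableSet_lt measurable_const hg
  -- decompose the error set
  have hset : {q : 𝒳 × Bool | (q.2 = true) ≠ (0 < g q.1)}
      = (Aᶜ ×ˢ ({true} : Set Bool)) ∪ (A ×ˢ ({false} : Set Bool)) := by
    ext ⟨x, b⟩
    cases b <;> simp [A, Ne, eq_iff_iff]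
  have hdisj : Disjoint (Aᶜ ×ˢ ({true} : Set Bool)) (A ×ˢ ({false} : Set Bool)) := by
    rw [Set.disjoint_left]
    rintro ⟨x, b⟩ ⟨hx1, _⟩ ⟨hx2, _⟩
    exact hx1 hx2
  have hmeas2 : MeasurableSet (A ×ˢ ({false} : Set Bool)) :=
    hA.prod (measurableSet_singleton false)
  have hPsplit : P {q : 𝒳 × Bool | (q.2 = true) ≠ (0 < g q.1)}
      = P (Aᶜ ×ˢ ({true} : Set Bool)) + P (A ×ˢ ({false} : Set Bool)) := by
    rw [hset, measure_union hdisj hmeas2]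
  -- μ A = P (A ×ˢ univ)
  have hμA : μ A = P (A ×ˢ (Set.univ : Set Bool)) := by
    rw [hμ, Measure.map_apply measurable_fst hA]
    congr 1
    ext ⟨x, b⟩
    simp
  -- P (A × {false}) = μ A - P (A × {true})
  have hfalse : (P (A ×ˢ ({false} : Set Bool))).toReal
      = (μ A).toReal - (P (A ×ˢ ({true} : Set Bool))).toReal := by
    have hsplit2 : P (A ×ˢ (Set.univ : Set Bool))
        = P (A ×ˢ ({false} : Set Bool)) + P (A ×ˢ ({true} : Set Bool)) := by
      have : A ×ˢ (Set.univ : Set Bool)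
          = (A ×ˢ ({false} : Set Bool)) ∪ (A ×ˢ ({true} : Set Bool)) := by
        ext ⟨x, b⟩; cases b <;> simp
      rw [this, measure_union ?_ (hA.prod (measurableSet_singleton true))]
      rw [Set.disjoint_left]
      rintro ⟨x, b⟩ ⟨_, hb1⟩ ⟨_, hb2⟩
      simp at hb1 hb2
      rw [hb1] at hb2; exact Bool.false_ne_true hb2
    rw [hμA, hsplit2, ENNReal.toReal_add (measure_ne_top _ _) (measure_ne_top _ _)]
    ring
  -- set integrals
  have hint_compl : ∫ x in Aᶜ, (η x + 1/2) ∂μ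
      = (∫ x, (η x + 1/2) ∂μ) - ∫ x in A, (η x + 1/2) ∂μ := by
    have := integral_add_compl hA (hηint.add (integrable_const (1/2 : ℝ)))
    simp only [Pi.add_apply] at this
    linarith [this]
  have hint_A : ∫ x in A, (η x + 1/2) ∂μ
      = (∫ x in A, η x ∂μ) + (1/2) * (μ A).toReal := by
    rw [integral_add hηint.integrableOn (integrable_const _), setIntegral_const]
    simp [mul_comm]
    rfl
  have hcompl_meas : MeasurableSet ((Aᶜ : Set 𝒳)) := hA.compl
  have hb1 := hbayes Aᶜ hcompl_meas
  have hb2 := hbayes A hA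
  unfold risk
  rw [hPsplit, ENNReal.toReal_add (measure_ne_top _ _) (measure_ne_top _ _),
    ← hb1, hfalse, ← hb2, hint_compl, hint_A]
  ring

/-- Excess risk formula: the difference of risks is twice the integral of |η|
    over the disagreement set. -/
lemma excess_risk_eq {P : Measure (𝒳 × Bool)} [IsProbabilityMeasure P] {η : 𝒳 → ℝ}
    (hη : IsBayesDecisionFunction P η) {g : 𝒳 → ℝ} (hg : Measurable g) :
    risk P g - risk P η
      = 2 * ∫ x in symmDiff {x | 0 < g x} {x | 0 < η x}, |η x| ∂(P.map Prod.fst) := by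
  obtain ⟨hmeas, hbd, hbayes⟩ := hη
  set μ := P.map Prod.fst with hμ
  haveI : IsProbabilityMeasure μ := Measure.isProbabilityMeasure_map measurable_fst.aemeasurable
  have hηint : Integrable η μ := by
    refine Integrable.mono' (integrable_const (1/2 : ℝ)) hmeas.aestronglyMeasurable ?_
    filter_upwards with x
    rw [Real.norm_eq_abs, abs_le]
    exact ⟨(hbd x).1, (hbd x).2⟩
  set A := {x | 0 < g x} with hA_def
  set B := {x | 0 < η x} with hB_def
  have hA : MeasurableSet A := measurableSet_lt measurable_const hg
  have hB : MeasurableSet B := measurableSet_lt measurable_const hmeas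
  have h1 := risk_eq_of_bayes ⟨hmeas, hbd, hbayes⟩ hg
  have h2 := risk_eq_of_bayes ⟨hmeas, hbd, hbayes⟩ hmeas
  rw [h1, h2]
  have hptwise : ∀ x, B.indicator η x - A.indicator η x
      = (symmDiff A B).indicator (fun x => |η x|) x := by
    intro x
    by_cases hxA : x ∈ A <;> by_cases hxB : x ∈ B
    · have : x ∉ symmDiff A B := by
        rw [Set.mem_symmDiff]; push_neg
        exact ⟨fun _ => hxB, fun _ => hxA⟩
      simp [Set.indicator_of_mem hxA, Set.indicator_of_mem hxB, Set.indicator_of_notMem this]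
    · have hmem : x ∈ symmDiff A B := Set.mem_symmDiff.mpr (Or.inl ⟨hxA, hxB⟩)
      have hle : η x ≤ 0 := not_lt.mp hxB
      simp [Set.indicator_of_mem hxA, Set.indicator_of_notMem hxB,
        Set.indicator_of_mem hmem, abs_of_nonpos hle]
    · have hmem : x ∈ symmDiff A B := Set.mem_symmDiff.mpr (Or.inr ⟨hxB, hxA⟩)
      have hpos : 0 < η x := hxB
      simp [Set.indicator_of_notMem hxA, Set.indicator_of_mem hxB,
        Set.indicator_of_mem hmem, abs_of_pos hpos]
    · have : x ∉ symmDiff A B := by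
        rw [Set.mem_symmDiff]; push_neg
        exact ⟨fun h => absurd h hxA, fun h => absurd h hxB⟩
      simp [Set.indicator_of_notMem hxA, Set.indicator_of_notMem hxB,
        Set.indicator_of_notMem this]
  have hkey : (∫ x in B, η x ∂μ) - (∫ x in A, η x ∂μ)
      = ∫ x in symmDiff A B, |η x| ∂μ := by
    rw [← integral_indicator hB, ← integral_indicator hA,
      ← integral_sub (hηint.indicator hB) (hηint.indicator hA),
      ← integral_indicator (hA.symmDiff hB)]
    exact integral_congr_ae (Filter.Eventually.of_forall hptwise)
  have : {x | 0 < η x} = B := rfl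
  rw [this]
  linarith [hkey]

end Aux

/-- Theorem 2: if the risks of f̃_n under G̃ converge to the Bayes risk of G̃
(and G̃(η̃(X)=0) = 0), then the risks under the clean distribution G converge:
R_G(f̃_n) → R_G(η̃). -/
theorem statement10 {𝒳 : Type*} [MeasurableSpace 𝒳]
    (G H : Measure (𝒳 × Bool)) [IsProbabilityMeasure G] [IsProbabilityMeasure H]
    (ε : ℝ) (hε : 0 ≤ ε) (hε1 : ε < 1)
    (ηt : 𝒳 → ℝ)
    (hηt : IsBayesDecisionFunction (contaminate G H ε) ηt)
    (hηt0 : (contaminate G H ε).map Prod.fst {x | ηt x = 0} = 0)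
    (f : ℕ → 𝒳 → ℝ) (hf : ∀ n, Measurable (f n))
    (hrisk : Tendsto (fun n => risk (contaminate G H ε) (f n)) atTop
      (nhds (risk (contaminate G H ε) ηt))) :
    Tendsto (fun n => risk G (f n)) atTop (nhds (risk G ηt)) := by
  set P := contaminate G H ε with hP_def
  haveI hPprob : IsProbabilityMeasure P := by
    constructor
    rw [hP_def]
    unfold contaminate
    simp only [Measure.add_apply, Measure.smul_apply, smul_eq_mul,
      measure_univ, mul_one]
    rw [← ENNReal.ofReal_add (by linarith) hε]
    norm_num
  set μ := P.map Prod.fst with hμ_def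
  set ν := G.map Prod.fst with hν_def
  haveI : IsProbabilityMeasure μ := Measure.isProbabilityMeasure_map measurable_fst.aemeasurable
  haveI : IsProbabilityMeasure ν := Measure.isProbabilityMeasure_map measurable_fst.aemeasurable
  obtain ⟨hmeas, hbd, hbayes⟩ := hηt
  set B := {x | 0 < ηt x} with hB_def
  have hB : MeasurableSet B := measurableSet_lt measurable_const hmeas
  set D : ℕ → Set 𝒳 := fun n => symmDiff {x | 0 < f n x} B with hD_def
  have hDmeas : ∀ n, MeasurableSet (D n) := fun n =>
    (measurableSet_lt measurable_const (hf n)).symmDiff hB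
  have hηint : Integrable ηt μ := by
    refine Integrable.mono' (integrable_const (1/2 : ℝ)) hmeas.aestronglyMeasurable ?_
    filter_upwards with x
    rw [Real.norm_eq_abs, abs_le]
    exact ⟨(hbd x).1, (hbd x).2⟩
  have habsint : Integrable (fun x => |ηt x|) μ := hηint.abs
  -- the disagreement integrals tend to 0
  have hI : Tendsto (fun n => ∫ x in D n, |ηt x| ∂μ) atTop (nhds 0) := by
    have hex : ∀ n, risk P (f n) - risk P ηt = 2 * ∫ x in D n, |ηt x| ∂μ := fun n =>
      excess_risk_eq ⟨hmeas, hbd, hbayes⟩ (hf n)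
    have h0 : Tendsto (fun n => risk P (f n) - risk P ηt) atTop (nhds 0) := by
      have := hrisk.sub_const (risk P ηt)
      simpa using this
    have : Tendsto (fun n => (risk P (f n) - risk P ηt) / 2) atTop (nhds 0) := by
      simpa using h0.div_const 2
    refine this.congr fun n => ?_
    rw [hex n]; ring
  -- μ (D n) → 0
  have hμD : Tendsto (fun n => (μ (D n)).toReal) atTop (nhds 0) := by
    rw [NormedAddCommGroup.tendsto_nhds_zero]
    intro ε' hε'
    -- find δ > 0 with μ {|ηt| < δ} < ε'/2
    obtain ⟨δ, hδpos, hδ⟩ : ∃ δ : ℝ, 0 < δ ∧ (μ {x | |ηt x| < δ}).toReal < ε' / 2 := by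
      set E : ℕ → Set 𝒳 := fun k => {x | |ηt x| < 1 / (k + 1)} with hE_def
      have hEmeas : ∀ k, NullMeasurableSet (E k) μ := fun k =>
        (measurableSet_lt hmeas.abs measurable_const).nullMeasurableSet
      have hEanti : Antitone E := by
        intro i j hij x hx
        simp only [hE_def, Set.mem_setOf_eq] at hx ⊢
        refine lt_of_lt_of_le hx ?_
        apply one_div_le_one_div_of_le (by positivity)
        exact_mod_cast Nat.succ_le_succ hij
      have hInter : (⋂ k, E k) = {x | ηt x = 0} := by
        ext x
        simp only [Set.mem_iInter, Set.mem_setOf_eq, hE_def]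
        constructor
        · intro h
          by_contra hne
          have habs : 0 < |ηt x| := abs_pos.mpr hne
          obtain ⟨k, hk⟩ := exists_nat_one_div_lt habs
          exact absurd (h k) (not_lt.mpr (le_of_lt hk))
        · intro h k
          rw [h]; simp; positivity
      have htend : Tendsto (fun k => μ (E k)) atTop (nhds (μ (⋂ k, E k))) :=
        tendsto_measure_iInter_atTop hEmeas hEanti ⟨0, measure_ne_top _ _⟩
      rw [hInter, hηt0] at htend
      have : ∀ᶠ k in atTop, μ (E k) < ENNReal.ofReal (ε' / 2) := by
        apply htend.eventually_lt_const
        simp [ENNReal.ofReal_pos]; linarith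
      obtain ⟨k, hk⟩ := this.exists
      refine ⟨1 / (k + 1), by positivity, ?_⟩
      rw [← ENNReal.lt_ofReal_iff_toReal_lt (measure_ne_top _ _)]
      exact hk
    -- eventually the integral is small
    have hev : ∀ᶠ n in atTop, ∫ x in D n, |ηt x| ∂μ < δ * (ε' / 2) := by
      have : (0:ℝ) < δ * (ε' / 2) := by positivity
      exact hI.eventually_lt_const this
    filter_upwards [hev] with n hn
    have hnonneg : (0:ℝ) ≤ (μ (D n)).toReal := ENNReal.toReal_nonneg
    rw [Real.norm_eq_abs, abs_of_nonneg hnonneg]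
    -- split D n
    have hsplit : (μ (D n)).toReal ≤ (μ (D n ∩ {x | δ ≤ |ηt x|})).toReal
        + (μ {x | |ηt x| < δ}).toReal := by
      have hsub : D n ⊆ (D n ∩ {x | δ ≤ |ηt x|}) ∪ {x | |ηt x| < δ} := by
        intro x hx
        by_cases hxδ : δ ≤ |ηt x|
        · exact Or.inl ⟨hx, hxδ⟩
        · exact Or.inr (not_le.mp hxδ)
      have h1 : μ (D n) ≤ μ (D n ∩ {x | δ ≤ |ηt x|}) + μ {x | |ηt x| < δ} :=
        le_trans (measure_mono hsub) (measure_union_le _ _)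
      rw [← ENNReal.toReal_add (measure_ne_top _ _) (measure_ne_top _ _)]
      exact ENNReal.toReal_mono
        (ENNReal.add_ne_top.mpr ⟨measure_ne_top _ _, measure_ne_top _ _⟩) h1
    -- Markov-type bound
    have hmarkov : δ * (μ (D n ∩ {x | δ ≤ |ηt x|})).toReal ≤ ∫ x in D n, |ηt x| ∂μ := by
      have hSmeas : MeasurableSet (D n ∩ {x | δ ≤ |ηt x|}) :=
        (hDmeas n).inter (measurableSet_le measurable_const hmeas.abs)
      have h1 : ∫ x in D n ∩ {x | δ ≤ |ηt x|}, δ ∂μ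
          ≤ ∫ x in D n ∩ {x | δ ≤ |ηt x|}, |ηt x| ∂μ := by
        refine setIntegral_mono_on (integrable_const _) habsint.integrableOn hSmeas ?_
        intro x hx; exact hx.2
      have h2 : ∫ x in D n ∩ {x | δ ≤ |ηt x|}, |ηt x| ∂μ ≤ ∫ x in D n, |ηt x| ∂μ := by
        refine setIntegral_mono_set habsint.integrableOn ?_ ?_
        · filter_upwards with x using abs_nonneg _
        · exact Filter.Eventually.of_forall Set.inter_subset_left
      rw [setIntegral_const] at h1
      calc δ * (μ (D n ∩ {x | δ ≤ |ηt x|})).toReal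
          = (μ (D n ∩ {x | δ ≤ |ηt x|})).toReal • δ := by rw [smul_eq_mul]; ring
        _ ≤ ∫ x in D n ∩ {x | δ ≤ |ηt x|}, |ηt x| ∂μ := h1
        _ ≤ ∫ x in D n, |ηt x| ∂μ := h2
    have hbound : (μ (D n ∩ {x | δ ≤ |ηt x|})).toReal < ε' / 2 := by
      by_contra hcon
      push_neg at hcon
      have : δ * (ε' / 2) ≤ δ * (μ (D n ∩ {x | δ ≤ |ηt x|})).toReal :=
        mul_le_mul_of_nonneg_left hcon (le_of_lt hδpos)
      linarith
    linarith
  -- ν (D n) → 0 via domination by μ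
  have hνD : Tendsto (fun n => (ν (D n)).toReal) atTop (nhds 0) := by
    have hdom : ∀ n, (ν (D n)).toReal ≤ (1 - ε)⁻¹ * (μ (D n)).toReal := by
      intro n
      have hmap : μ (D n) = ENNReal.ofReal (1 - ε) * ν (D n)
          + ENNReal.ofReal ε * (H.map Prod.fst (D n)) := by
        rw [hμ_def, hν_def, hP_def]
        unfold contaminate
        rw [Measure.map_apply measurable_fst (hDmeas n),
          Measure.map_apply measurable_fst (hDmeas n)]
        have : (H.map Prod.fst) (D n) = H (Prod.fst ⁻¹' (D n)) :=
          Measure.map_apply measurable_fst (hDmeas n)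
        rw [this]
        simp [Measure.add_apply, Measure.smul_apply, smul_eq_mul]
      have h1 : ENNReal.ofReal (1 - ε) * ν (D n) ≤ μ (D n) := by
        rw [hmap]; exact le_add_of_nonneg_right (by positivity)
      have h2 : (1 - ε) * (ν (D n)).toReal ≤ (μ (D n)).toReal := by
        have := ENNReal.toReal_mono (measure_ne_top _ _) h1
        rwa [ENNReal.toReal_mul, ENNReal.toReal_ofReal (by linarith)] at this
      have h1ε : (0:ℝ) < 1 - ε := by linarith
      have h3 : (ν (D n)).toReal ≤ (μ (D n)).toReal / (1 - ε) :=
        (le_div_iff₀ h1ε).mpr (by linarith)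
      rwa [div_eq_inv_mul] at h3
    have hdommul : Tendsto (fun n => (1 - ε)⁻¹ * (μ (D n)).toReal) atTop (nhds 0) := by
      have := hμD.const_mul ((1 - ε)⁻¹)
      simpa using this
    exact squeeze_zero (fun n => ENNReal.toReal_nonneg) hdom hdommul
  -- final step
  rw [tendsto_iff_norm_sub_tendsto_zero]
  refine squeeze_zero (fun n => norm_nonneg _) (fun n => ?_) hνD
  rw [Real.norm_eq_abs]
  unfold risk
  set S : ℕ → Set (𝒳 × Bool) := fun n => {q | (q.2 = true) ≠ (0 < f n q.1)} with hS_def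
  set T : Set (𝒳 × Bool) := {q | (q.2 = true) ≠ (0 < ηt q.1)} with hT_def
  have hsub : symmDiff (S n) T ⊆ (D n) ×ˢ (Set.univ : Set Bool) := by
    intro ⟨x, b⟩ hq
    rw [Set.mem_symmDiff] at hq
    refine ⟨?_, trivial⟩
    rw [hD_def]
    simp only [Set.mem_symmDiff, Set.mem_setOf_eq, hB_def]
    rcases hq with ⟨h1, h2⟩ | ⟨h1, h2⟩
    · simp only [hS_def, hT_def, Set.mem_setOf_eq, Ne, eq_iff_iff, not_not] at h1 h2
      by_cases hfx : 0 < f n x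
      · left; refine ⟨hfx, fun hη => ?_⟩
        cases b <;> tauto
      · right
        cases b <;> tauto
    · simp only [hS_def, hT_def, Set.mem_setOf_eq, Ne, eq_iff_iff, not_not] at h1 h2
      by_cases hfx : 0 < f n x
      · left; refine ⟨hfx, fun hη => ?_⟩
        cases b <;> tauto
      · right
        cases b <;> tauto
  have hνeq : G ((D n) ×ˢ (Set.univ : Set Bool)) = ν (D n) := by
    rw [hν_def, Measure.map_apply measurable_fst (hDmeas n)]
    congr 1
    ext ⟨x, b⟩
    simp
  calc |(G (S n)).toReal - (G T).toReal| ≤ (G (symmDiff (S n) T)).toReal :=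
        abs_toReal_measure_sub_le _ _
    _ ≤ (G ((D n) ×ˢ (Set.univ : Set Bool))).toReal := by
        apply ENNReal.toReal_mono (measure_ne_top _ _) (measure_mono hsub)
    _ = (ν (D n)).toReal := by rw [hνeq]
end
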